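/- Let 1/4 ≤ a ≤ 1 and 0 < ρ < 1. Then the L² norm of μ^{-1/2+a} N_ρ over ℝ³ is comparable to (1-ρ)^{-1/4}; i.e. there exist constants c, C > 0 independent of ρ such that c (1-ρ)^{-1/2} ≤ ∫_{ℝ³} μ(v)^{2a}/(1 - ρμ(v))² dv ≤ C (1-ρ)^{-1/2}. -/

import Mathlib

open MeasureTheory Real

noncomputable def quantumMu (v : EuclideanSpace ℝ (Fin 3)) : ℝ := Real.exp (-‖v‖^2 / 2)

local notation "E3" => EuclideanSpace ℝ (Fin 3)

/-- Gaussian-type pointwise bound by Japanese bracket. -/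
lemma exp_bound (r : ℝ) (hr : 0 ≤ r) : Real.exp (-(r^2/4)) ≤ 520 * ((1+r)^4)⁻¹ := by
  have hE : Real.exp (r^2/4) = (Real.exp (r^2/8))^2 := by
    rw [← Real.exp_nat_mul]; ring_nf
  have h1 := Real.add_one_le_exp (r^2/8)
  have h2 : (1:ℝ) ≤ Real.exp (r^2/4) := Real.one_le_exp (by positivity)
  have h3 : r^4/64 ≤ Real.exp (r^2/4) := by nlinarith [sq_nonneg (r^2/8)]
  have hpos : (0:ℝ) < (1+r)^4 := by positivity
  have key : (1+r)^4 ≤ 520 * Real.exp (r^2/4) := by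
    nlinarith [sq_nonneg (r-1), sq_nonneg (r^2-1), sq_nonneg r, sq_nonneg (r^2-r)]
  rw [Real.exp_neg]
  rw [inv_le_iff_one_le_mul₀ (Real.exp_pos _)]
  calc (1:ℝ) = (1+r)^4 * ((1+r)^4)⁻¹ := by field_simp
  _ ≤ 520 * Real.exp (r^2/4) * ((1+r)^4)⁻¹ := by gcongr
  _ = 520 * ((1+r)^4)⁻¹ * Real.exp (r^2/4) := by ring

/-- Japanese bracket integrability on E3. -/
lemma br_integrable : Integrable (fun v : E3 => ((1+‖v‖)^4)⁻¹) := by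
  have h := integrable_one_add_norm (E := E3) (μ := volume) (r := 4)
    (by simp [finrank_euclideanSpace_fin]; norm_num)
  refine h.congr (Filter.Eventually.of_forall fun v => ?_)
  simp only
  rw [show (-4:ℝ) = -((4:ℕ):ℝ) by norm_num, Real.rpow_neg (by positivity), Real.rpow_natCast]

noncomputable def gfun (b : ℝ) (v : EuclideanSpace ℝ (Fin 3)) : ℝ := ((b + ‖v‖^2/4)^2)⁻¹

lemma gfun_nonneg (b : ℝ) (v : E3) : 0 ≤ gfun b v := by unfold gfun; positivity

lemma gfun_cont {b : ℝ} (hb : 0 < b) : Continuous (gfun b) := by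
  unfold gfun
  have : ∀ v : E3, (b + ‖v‖^2/4)^2 ≠ 0 := by
    intro v; positivity
  exact ((continuous_const.add ((continuous_norm.pow 2).div_const 4)).pow 2).inv₀ this

lemma gfun_integrable {b : ℝ} (hb : 0 < b) (hb1 : b ≤ 1) : Integrable (gfun b) := by
  refine (br_integrable.const_mul (64*(b^2)⁻¹)).mono' (gfun_cont hb).aestronglyMeasurable
    (Filter.Eventually.of_forall fun v => ?_)
  rw [Real.norm_eq_abs, abs_of_nonneg (gfun_nonneg b v)]
  have hr := norm_nonneg v
  have h8 : b * (1+‖v‖)^2 ≤ 8 * (b + ‖v‖^2/4) := by nlinarith [sq_nonneg (1-‖v‖)]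
  have key : b^2*(1+‖v‖)^4 ≤ 64 * (b + ‖v‖^2/4)^2 := by
    have := pow_le_pow_left₀ (by positivity) h8 2
    nlinarith [this]
  have hA : (0:ℝ) < (b + ‖v‖^2/4)^2 := by positivity
  have hB : (0:ℝ) < b^2*(1+‖v‖)^4 := by positivity
  unfold gfun
  rw [show (64*(b^2)⁻¹*((1+‖v‖)^4)⁻¹ : ℝ) = 64 / (b^2*(1+‖v‖)^4) by field_simp]
  rw [inv_eq_one_div, div_le_div_iff₀ hA hB]
  linarith [key]

lemma gfun_scaling {b : ℝ} (hb : 0 < b) :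
    ∫ v : E3, gfun b v = (Real.sqrt b)⁻¹ * ∫ v : E3, gfun 1 v := by
  have hs : (0:ℝ) < Real.sqrt b := Real.sqrt_pos.2 hb
  have hcomp := MeasureTheory.Measure.integral_comp_smul (μ := volume) (gfun b) (Real.sqrt b)
  have heq : ∀ x : E3, gfun b (Real.sqrt b • x) = (b^2)⁻¹ * gfun 1 x := by
    intro x
    unfold gfun
    rw [norm_smul, Real.norm_eq_abs, abs_of_nonneg hs.le, mul_pow, Real.sq_sqrt hb.le]
    have h1 : (0:ℝ) < (b + b*‖x‖^2/4) := by positivity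
    have h2 : (0:ℝ) < (1 + ‖x‖^2/4) := by positivity
    field_simp
  simp only [heq] at hcomp
  rw [MeasureTheory.integral_const_mul, finrank_euclideanSpace_fin, smul_eq_mul, abs_inv, abs_pow,
    abs_of_nonneg hs.le] at hcomp
  have hb2 : b^2 = (Real.sqrt b)^4 := by
    rw [show (4:ℕ)=2*2 from rfl, pow_mul, Real.sq_sqrt hb.le]
  rw [hb2] at hcomp
  have := hcomp.symm
  field_simp at this ⊢
  have hs3 : (Real.sqrt b)^3 ≠ 0 := by positivity
  apply mul_right_cancel₀ hs3
  linear_combination (Real.sqrt b)^3 * this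

lemma mu_pos (v : E3) : 0 < quantumMu v := Real.exp_pos _

lemma mu_le_one (v : E3) : quantumMu v ≤ 1 := by
  unfold quantumMu
  rw [Real.exp_le_one_iff]
  nlinarith [sq_nonneg ‖v‖]

lemma one_sub_mu_le (v : E3) : 1 - quantumMu v ≤ ‖v‖^2/2 := by
  have h := Real.add_one_le_exp (-‖v‖^2/2)
  unfold quantumMu
  linarith

lemma one_sub_mu_ge (v : E3) (h : ‖v‖ ≤ 1) : ‖v‖^2/4 ≤ 1 - quantumMu v := by
  set x := ‖v‖^2/2 with hx
  have hx0 : 0 ≤ x := by positivity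
  have hx1 : x ≤ 1/2 := by
    have : ‖v‖^2 ≤ 1 := by nlinarith [norm_nonneg v]
    simp only [hx]; linarith
  have h1 : 1 + x ≤ Real.exp x := by linarith [Real.add_one_le_exp x]
  have h2 : quantumMu v ≤ (1+x)⁻¹ := by
    unfold quantumMu
    rw [show -‖v‖^2/2 = -x by rw [hx]; ring, Real.exp_neg]
    exact inv_anti₀ (by linarith) h1
  have h3 : (1+x)⁻¹ ≤ 1 - x/2 := by
    rw [inv_le_iff_one_le_mul₀ (by linarith)]
    nlinarith
  have : quantumMu v ≤ 1 - x/2 := le_trans h2 h3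
  simp only [hx] at this ⊢
  linarith

lemma mu_rpow_eq (a : ℝ) (v : E3) : quantumMu v ^ (2*a) = Real.exp (-(a*‖v‖^2)) := by
  unfold quantumMu
  rw [← Real.exp_mul]
  ring_nf

lemma mu_rpow_le (a : ℝ) (ha : 1/4 ≤ a) (v : E3) :
    quantumMu v ^ (2*a) ≤ Real.exp (-(‖v‖^2/4)) := by
  rw [mu_rpow_eq]
  apply Real.exp_le_exp.mpr
  nlinarith [sq_nonneg ‖v‖]

lemma mu_rpow_ge (a : ℝ) (ha : a ≤ 1) (v : E3) :
    Real.exp (-(‖v‖^2)) ≤ quantumMu v ^ (2*a) := by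
  rw [mu_rpow_eq]
  apply Real.exp_le_exp.mpr
  nlinarith [sq_nonneg ‖v‖]

lemma exp_half_le : Real.exp (-(1:ℝ)/2) ≤ 2/3 := by
  have h1 : Real.exp 1 = (Real.exp (1/2))^2 := by
    rw [← Real.exp_nat_mul]; norm_num
  have h2 := Real.exp_one_gt_d9
  have h3 : (0:ℝ) < Real.exp (1/2) := Real.exp_pos _
  have h4 : (3:ℝ)/2 ≤ Real.exp (1/2) := by nlinarith
  rw [show -(1:ℝ)/2 = -(1/2) by norm_num, Real.exp_neg]
  rw [inv_le_iff_one_le_mul₀ h3]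
  nlinarith

set_option maxHeartbeats 1000000 in
theorem stmt_2 (a : ℝ) (ha1 : 1/4 ≤ a) (ha2 : a ≤ 1) :
    ∃ c C : ℝ, 0 < c ∧ 0 < C ∧ ∀ ρ : ℝ, 0 < ρ → ρ < 1 →
      c * (1 - ρ) ^ (-(1:ℝ)/2) ≤
        ∫ v : EuclideanSpace ℝ (Fin 3), (quantumMu v) ^ (2*a) / (1 - ρ * quantumMu v)^2 ∧
      (∫ v : EuclideanSpace ℝ (Fin 3), (quantumMu v) ^ (2*a) / (1 - ρ * quantumMu v)^2) ≤
        C * (1 - ρ) ^ (-(1:ℝ)/2) := by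
  set J := ∫ v : E3, gfun 1 v with hJdef
  have hJ0 : 0 ≤ J := integral_nonneg (gfun_nonneg 1)
  set K := ∫ v : E3, ((1+‖v‖)^4)⁻¹ with hKdef
  have hK0 : 0 ≤ K := integral_nonneg (fun v => by positivity)
  set κ := (volume (Metric.ball (0:E3) 1)).toReal with hκdef
  have hκ0 : 0 < κ := ENNReal.toReal_pos (Metric.measure_ball_pos volume 0 one_pos).ne'
    measure_ball_lt_top.ne
  refine ⟨Real.exp (-1) * (4/9) * κ, 4*J + 4680*K + 1,
    by positivity, by nlinarith [Real.exp_pos (-1:ℝ)], ?_⟩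
  intro ρ hρ0 hρ1
  set b := 1 - ρ with hbdef
  have hb : 0 < b := by simp only [hbdef]; linarith
  have hb1 : b ≤ 1 := by simp only [hbdef]; linarith
  set s := Real.sqrt b with hsdef
  have hs : 0 < s := Real.sqrt_pos.2 hb
  have hs2 : s^2 = b := Real.sq_sqrt hb.le
  have hs1 : s ≤ 1 := by nlinarith
  have hrw : b ^ (-(1:ℝ)/2) = s⁻¹ := by
    rw [show (-(1:ℝ)/2) = -(1/2:ℝ) by norm_num, Real.rpow_neg hb.le, ← Real.sqrt_eq_rpow]
  set f : E3 → ℝ := fun v => (quantumMu v) ^ (2*a) / (1 - ρ * quantumMu v)^2 with hfdef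
  have hden : ∀ v, b ≤ 1 - ρ * quantumMu v := by
    intro v
    have h1 : ρ * quantumMu v ≤ ρ := by nlinarith [mu_le_one v, mu_pos v]
    simp only [hbdef]; linarith
  have hf_nonneg : ∀ v, 0 ≤ f v := by
    intro v
    have := mu_pos v
    have h2 := hden v
    simp only [hfdef]
    positivity
  have hf_cont : Continuous f := by
    simp only [hfdef]
    apply Continuous.div
    · exact (Real.continuous_exp.comp ((continuous_norm.pow 2).neg.div_const 2)).rpow_const
        (fun v => Or.inl (mu_pos v).ne')
    · exact ((continuous_const.sub (continuous_const.mul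
        (Real.continuous_exp.comp ((continuous_norm.pow 2).neg.div_const 2)))).pow 2)
    · intro v
      have := hden v
      exact pow_ne_zero 2 (by linarith)
  have hf_int : Integrable f := by
    refine (br_integrable.const_mul (520*(b^2)⁻¹)).mono' hf_cont.aestronglyMeasurable
      (Filter.Eventually.of_forall fun v => ?_)
    rw [Real.norm_eq_abs, abs_of_nonneg (hf_nonneg v)]
    have h1 : f v ≤ Real.exp (-(‖v‖^2/4)) / b^2 := by
      simp only [hfdef]
      apply div_le_div₀ (Real.exp_nonneg _) (mu_rpow_le a ha1 v) (by positivity)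
      exact pow_le_pow_left₀ hb.le (hden v) 2
    have h2 : Real.exp (-(‖v‖^2/4)) / b^2 ≤ 520*(b^2)⁻¹*((1+‖v‖)^4)⁻¹ := by
      rw [div_eq_mul_inv]
      calc Real.exp (-(‖v‖^2/4)) * (b^2)⁻¹ ≤ (520 * ((1+‖v‖)^4)⁻¹) * (b^2)⁻¹ := by
            apply mul_le_mul_of_nonneg_right (exp_bound ‖v‖ (norm_nonneg v)) (by positivity)
        _ = 520*(b^2)⁻¹*((1+‖v‖)^4)⁻¹ := by ring
    linarith
  constructor
  · -- lower bound
    rw [hrw]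
    have hSfin : volume (Metric.ball (0:E3) s) ≠ ⊤ := measure_ball_lt_top.ne
    have hSvol : volume (Metric.ball (0:E3) s)
        = ENNReal.ofReal (s^3) * volume (Metric.ball (0:E3) 1) := by
      rw [Measure.addHaar_ball volume _ hs.le, finrank_euclideanSpace_fin]
    have hconst : ∀ v ∈ Metric.ball (0:E3) s, Real.exp (-1) * (4/(9*b^2)) ≤ f v := by
      intro v hv
      rw [Metric.mem_ball, dist_zero_right] at hv
      have hv2 : ‖v‖^2 ≤ b := by nlinarith [norm_nonneg v]
      have hnum : Real.exp (-1) ≤ quantumMu v ^ (2*a) := by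
        refine le_trans ?_ (mu_rpow_ge a ha2 v)
        apply Real.exp_le_exp.mpr; nlinarith
      have hd1 : 1 - ρ * quantumMu v ≤ 3*b/2 := by
        have h1 : 1 - quantumMu v ≤ ‖v‖^2/2 := one_sub_mu_le v
        have h2 : ρ * (1 - quantumMu v) ≤ 1 - quantumMu v := by nlinarith [mu_le_one v]
        have h3 : 1 - ρ * quantumMu v = b + ρ*(1 - quantumMu v) := by
          simp only [hbdef]; ring
        nlinarith
      have hdsq : (1 - ρ*quantumMu v)^2 ≤ (3*b/2)^2 := by
        have := hden v
        nlinarith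
      calc Real.exp (-1) * (4/(9*b^2)) = Real.exp (-1) / ((3*b/2)^2) := by
            field_simp; ring
      _ ≤ f v := by
            simp only [hfdef]
            exact div_le_div₀ (Real.rpow_nonneg (mu_pos v).le _) hnum (by nlinarith [hden v]) hdsq
    have h1 := setIntegral_ge_of_const_le_real measurableSet_ball hSfin hconst hf_int.integrableOn
    have h2 : (∫ x in Metric.ball (0:E3) s, f x) ≤ ∫ x, f x :=
      setIntegral_le_integral hf_int (Filter.Eventually.of_forall hf_nonneg)
    have h3 : (volume (Metric.ball (0:E3) s)).toReal = s^3 * κ := by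
      rw [hSvol, ENNReal.toReal_mul, ENNReal.toReal_ofReal (by positivity), hκdef]
    rw [measureReal_def, h3] at h1
    have h4 : Real.exp (-1) * (4/9) * κ * s⁻¹ = Real.exp (-1) * (4/(9*b^2)) * (s^3*κ) := by
      rw [← hs2]
      field_simp
    rw [h4]
    exact le_trans h1 h2
  · -- upper bound
    rw [hrw]
    have hpt : ∀ v, f v ≤ 4 * gfun b v + 4680*((1+‖v‖)^4)⁻¹ := by
      intro v
      rcases le_total ‖v‖ 1 with h|h
      · have h1 : quantumMu v ^ (2*a) ≤ 1 := by
          calc quantumMu v ^ (2*a) ≤ Real.exp (-(‖v‖^2/4)) := mu_rpow_le a ha1 v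
          _ ≤ 1 := Real.exp_le_one_iff.mpr (by nlinarith [sq_nonneg ‖v‖])
        have h2 : (b + ‖v‖^2/4)/2 ≤ 1 - ρ*quantumMu v := by
          have h3 := one_sub_mu_ge v h
          have h4 : 1 - quantumMu v ≤ 1 - ρ * quantumMu v := by nlinarith [mu_pos v]
          have h5 := hden v
          linarith
        have h6 : ((b + ‖v‖^2/4)/2)^2 ≤ (1 - ρ*quantumMu v)^2 :=
          pow_le_pow_left₀ (by positivity) h2 2
        have h7 : f v ≤ 1 / (((b + ‖v‖^2/4)/2)^2) := by
          simp only [hfdef]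
          exact div_le_div₀ zero_le_one h1 (by nlinarith [hden v]) h6
        have h8 : (1:ℝ) / (((b + ‖v‖^2/4)/2)^2) = 4 * gfun b v := by
          unfold gfun
          have : (0:ℝ) < b + ‖v‖^2/4 := by positivity
          field_simp
          ring
        have h9 : (0:ℝ) ≤ 4680*((1+‖v‖)^4)⁻¹ := by positivity
        rw [h8] at h7
        linarith
      · have h2 : quantumMu v ≤ 2/3 := by
          calc quantumMu v ≤ Real.exp (-(1:ℝ)/2) := by
                unfold quantumMu
                apply Real.exp_le_exp.mpr
                nlinarith
          _ ≤ 2/3 := exp_half_le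
        have h3 : (1:ℝ)/3 ≤ 1 - ρ*quantumMu v := by nlinarith [mu_pos v]
        have h4 : f v ≤ Real.exp (-(‖v‖^2/4)) / ((1/3:ℝ)^2) := by
          simp only [hfdef]
          exact div_le_div₀ (Real.exp_nonneg _) (mu_rpow_le a ha1 v) (by nlinarith [hden v])
            (pow_le_pow_left₀ (by norm_num) h3 2)
        have h5 : Real.exp (-(‖v‖^2/4)) / ((1/3:ℝ)^2) = 9 * Real.exp (-(‖v‖^2/4)) := by
          rw [show ((1/3:ℝ))^2 = (9:ℝ)⁻¹ by norm_num, division_def, inv_inv, mul_comm]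
        have h6 : (9:ℝ) * Real.exp (-(‖v‖^2/4)) ≤ 4680*((1+‖v‖)^4)⁻¹ := by
          linarith [exp_bound ‖v‖ (norm_nonneg v)]
        have h7 : (0:ℝ) ≤ 4 * gfun b v := by
          have := gfun_nonneg b v
          linarith
        rw [h5] at h4
        linarith
    have hgint := (gfun_integrable hb hb1).const_mul 4
    have hbint := br_integrable.const_mul 4680
    have h8 := integral_mono hf_int (hgint.add hbint) hpt
    simp only [Pi.add_apply] at h8
    rw [integral_add hgint hbint, MeasureTheory.integral_const_mul,
      MeasureTheory.integral_const_mul, gfun_scaling hb, ← hsdef, ← hJdef, ← hKdef] at h8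
    have hsinv : 1 ≤ s⁻¹ := by
      rw [one_le_inv_iff₀]
      exact ⟨hs, hs1⟩
    have hsinv0 : (0:ℝ) ≤ s⁻¹ := by positivity
    have hKs : K ≤ K * s⁻¹ := by nlinarith
    have hexpand : (4*J+4680*K+1)*s⁻¹ = 4*(s⁻¹*J) + 4680*(K*s⁻¹) + s⁻¹ := by ring
    rw [hexpand]
    linarith [h8]
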